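/- Let p(y₁,...,yₘ) be a multilinear real stable polynomial. Then for all 1 ≤ i < j ≤ m and all x ∈ ℝᵐ: (∂_{yᵢ}p)(x) · (∂_{yⱼ}p)(x) ≥ p(x) · (∂_{yᵢ}∂_{yⱼ}p)(x). -/

import Mathlib

open MvPolynomial Polynomial Complex

lemma aux_taylor1 {m : ℕ} (q : MvPolynomial (Fin m) ℝ) (j : Fin m)
    (h : q.degreeOf j ≤ 1) (z : Fin m → ℂ) (t : ℂ) :
    MvPolynomial.aeval (Function.update z j t) q
      = MvPolynomial.aeval z q
        + (t - z j) * MvPolynomial.aeval z (MvPolynomial.pderiv j q) := by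
  have key : ∀ d ∈ q.support,
      MvPolynomial.aeval (Function.update z j t) (MvPolynomial.monomial d (coeff d q))
        = MvPolynomial.aeval z (MvPolynomial.monomial d (coeff d q))
          + (t - z j) * MvPolynomial.aeval z (pderiv j (MvPolynomial.monomial d (coeff d q))) := by
    intro d hd
    have hdj : d j ≤ 1 := h.trans' (monomial_le_degreeOf j hd)
    set a := coeff d q
    have hprod : ∀ (e : Fin m →₀ ℕ) (g : Fin m → ℂ),
        MvPolynomial.aeval g (MvPolynomial.monomial e a) = (a : ℂ) * ∏ k, g k ^ e k := by
      intro e g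
      rw [MvPolynomial.aeval_monomial, Finsupp.prod_pow]
      norm_num [Algebra.algebraMap_eq_smul_one, Complex.real_smul]
    have hsame : ∏ k ∈ {j}ᶜ, Function.update z j t k ^ d k
        = ∏ k ∈ {j}ᶜ, z k ^ d k := by
      refine Finset.prod_congr rfl fun k hk => ?_
      rw [Function.update_of_ne (by simpa using hk)]
    rcases Nat.le_one_iff_eq_zero_or_eq_one.mp hdj with h0 | h1
    · have : pderiv j (MvPolynomial.monomial d a) = 0 := by
        simp [pderiv_monomial, h0]
      rw [this, map_zero, mul_zero, add_zero, hprod d, hprod d,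
        Fintype.prod_eq_mul_prod_compl j, Fintype.prod_eq_mul_prod_compl j (fun k => z k ^ d k),
        hsame, Function.update_self, h0, pow_zero, pow_zero]
    · have hpd : pderiv j (MvPolynomial.monomial d a) = MvPolynomial.monomial (d - Finsupp.single j 1) a := by
        rw [pderiv_monomial, h1]
        norm_num
      have hexp : ∀ g : Fin m → ℂ, ∏ k, g k ^ ((d - Finsupp.single j 1 : Fin m →₀ ℕ) k)
          = ∏ k ∈ {j}ᶜ, g k ^ d k := by
        intro g
        rw [Fintype.prod_eq_mul_prod_compl j]
        have hj0 : (d - Finsupp.single j 1 : Fin m →₀ ℕ) j = 0 := by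
          simp [Finsupp.tsub_apply, h1]
        rw [hj0, pow_zero, one_mul]
        refine Finset.prod_congr rfl fun k hk => ?_
        have hkj : k ≠ j := by simpa using hk
        congr 1
        simp [Finsupp.tsub_apply, Finsupp.single_apply, (Ne.symm hkj)]
      rw [hpd, hprod d, hprod d, hprod (d - Finsupp.single j 1),
        Fintype.prod_eq_mul_prod_compl j, Fintype.prod_eq_mul_prod_compl j (fun k => z k ^ d k),
        hsame, Function.update_self, h1, pow_one, pow_one, hexp]
      ring
  calc MvPolynomial.aeval (Function.update z j t) q
      = ∑ d ∈ q.support, MvPolynomial.aeval (Function.update z j t) (MvPolynomial.monomial d (coeff d q)) := by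
        rw [← map_sum, support_sum_monomial_coeff]
    _ = ∑ d ∈ q.support, (MvPolynomial.aeval z (MvPolynomial.monomial d (coeff d q))
          + (t - z j) * MvPolynomial.aeval z (pderiv j (MvPolynomial.monomial d (coeff d q)))) :=
        Finset.sum_congr rfl key
    _ = _ := by
        rw [Finset.sum_add_distrib, ← Finset.mul_sum]
        congr 1
        · rw [← map_sum, support_sum_monomial_coeff]
        · congr 1
          rw [← map_sum, ← map_sum, support_sum_monomial_coeff]

lemma aux_chain {m : ℕ} (φ : Fin m → Polynomial ℝ) (q : MvPolynomial (Fin m) ℝ) :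
    Polynomial.derivative (MvPolynomial.aeval φ q)
      = ∑ k, MvPolynomial.aeval φ (MvPolynomial.pderiv k q) * Polynomial.derivative (φ k) := by
  induction q using MvPolynomial.induction_on with
  | C a => simp
  | add p q hp hq =>
      simp only [map_add, hp, hq, ← Finset.sum_add_distrib, add_mul]
  | mul_X p n ih =>
      simp only [map_mul, MvPolynomial.aeval_X, Polynomial.derivative_mul, ih, pderiv_mul,
        MvPolynomial.pderiv_X, map_add, add_mul, Finset.sum_add_distrib, Finset.sum_mul]
      refine congrArg₂ (· + ·) ?_ ?_
      · exact Finset.sum_congr rfl fun k _ => by ring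
      · rw [Finset.sum_eq_single n]
        · simp
        · intro k _ hkn
          simp [Pi.single_eq_of_ne hkn.symm]
        · simp

lemma aux_comp {m : ℕ} {S : Type*} [CommSemiring S] [Algebra ℝ S]
    (φ : Fin m → Polynomial ℝ) (s : S) (q : MvPolynomial (Fin m) ℝ) :
    Polynomial.aeval s (MvPolynomial.aeval φ q)
      = MvPolynomial.aeval (fun k => Polynomial.aeval s (φ k)) q :=
  MvPolynomial.comp_aeval_apply (f := φ) (Polynomial.aeval s) q

noncomputable def auxE (f : Polynomial ℝ) (σ : ℝ) : ℝ → ℂ := fun ν =>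
  Polynomial.eval ((ν : ℂ) * Complex.I)
    (((f.map (algebraMap ℝ ℂ)).comp (Polynomial.X + Polynomial.C (σ : ℂ))).divX.divX)

lemma auxE_continuous (f : Polynomial ℝ) (σ : ℝ) : Continuous (auxE f σ) := by
  unfold auxE
  exact (Polynomial.continuous _).comp (Complex.continuous_ofReal.mul continuous_const)

lemma aux_expand (f : Polynomial ℝ) (σ ν : ℝ) :
    Polynomial.aeval ((σ : ℂ) + (ν : ℂ) * Complex.I) f
      = ((Polynomial.eval σ f : ℝ) : ℂ)
        + ((ν : ℂ) * Complex.I) * ((Polynomial.eval σ (Polynomial.derivative f) : ℝ) : ℂ)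
        + ((ν : ℂ) * Complex.I) ^ 2 * auxE f σ ν := by
  set u : ℂ := (ν : ℂ) * Complex.I
  set G : Polynomial ℂ := (f.map (algebraMap ℝ ℂ)).comp (Polynomial.X + Polynomial.C (σ : ℂ))
    with hG
  have h1 : Polynomial.aeval ((σ : ℂ) + u) f = G.eval u := by
    rw [Polynomial.aeval_def, ← Polynomial.eval_map, hG, Polynomial.eval_comp]
    simp [add_comm]
  have hc0 : G.coeff 0 = ((Polynomial.eval σ f : ℝ) : ℂ) := by
    rw [Polynomial.coeff_zero_eq_eval_zero, hG, Polynomial.eval_comp]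
    simp [Polynomial.eval_map, ← Polynomial.aeval_def]
    rw [show ((σ:ℂ)) = algebraMap ℝ ℂ σ from rfl, Polynomial.aeval_algebraMap_apply_eq_algebraMap_eval]
    rfl
  have hc1 : G.coeff 1 = ((Polynomial.eval σ (Polynomial.derivative f) : ℝ) : ℂ) := by
    have : G.coeff 1 = (Polynomial.derivative G).coeff 0 := by
      rw [Polynomial.coeff_derivative]; push_cast; ring
    rw [this, Polynomial.coeff_zero_eq_eval_zero, hG, Polynomial.derivative_comp]
    simp [Polynomial.eval_comp, Polynomial.derivative_map, Polynomial.eval_map,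
      ← Polynomial.aeval_def]
    rw [show ((σ:ℂ)) = algebraMap ℝ ℂ σ from rfl, Polynomial.aeval_algebraMap_apply_eq_algebraMap_eval]
    rfl
  have key : G = Polynomial.C (G.coeff 0) + Polynomial.X * (Polynomial.C (G.divX.coeff 0)
      + Polynomial.X * G.divX.divX) := by
    conv_lhs => rw [← Polynomial.X_mul_divX_add G]
    conv_lhs => rw [← Polynomial.X_mul_divX_add G.divX]
    ring
  have := congrArg (Polynomial.eval u) key
  rw [h1, this]
  simp only [Polynomial.eval_add, Polynomial.eval_mul, Polynomial.eval_C, Polynomial.eval_X,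
    hc0]
  rw [Polynomial.coeff_divX, hc1]
  unfold auxE
  ring

lemma aux_limit (W : ℝ) (R : ℝ → ℝ) (hR : Continuous R)
    (h : ∀ ν : ℝ, 0 < ν → 0 ≤ ν * (W + ν * R ν)) : 0 ≤ W := by
  have hten : Filter.Tendsto (fun ν : ℝ => W + ν * R ν) (nhdsWithin 0 (Set.Ioi 0)) (nhds W) := by
    have hc : Continuous (fun ν : ℝ => W + ν * R ν) := by continuity
    exact (hc.tendsto' 0 W (by simp)).mono_left nhdsWithin_le_nhds
  refine ge_of_tendsto hten ?_
  filter_upwards [self_mem_nhdsWithin] with ν hν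
  have hν' : (0:ℝ) < ν := hν
  nlinarith [h ν hν']

lemma aux_delta (E K : ℝ) (h : ∀ δ : ℝ, 0 < δ → 0 ≤ E + δ * K) : 0 ≤ E :=
  aux_limit E (fun _ => K) continuous_const fun ν hν => mul_nonneg hν.le (h ν hν)

lemma sum_split {m : ℕ} (i j : Fin m) (hij : i ≠ j) (g : Fin m → ℝ) (δ : ℝ) :
    ∑ k, g k * (if k = i then 1 else if k = j then 0 else δ)
      = g i + δ * ∑ k ∈ Finset.univ \ {i, j}, g k := by
  classical
  have huniv : (Finset.univ : Finset (Fin m))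
      = insert i (insert j (Finset.univ \ {i, j})) := by
    ext k
    by_cases hki : k = i <;> by_cases hkj : k = j <;> simp [hki, hkj]
  rw [Finset.mul_sum]
  nth_rewrite 1 [huniv]
  rw [Finset.sum_insert (by simp [hij]), Finset.sum_insert (by simp)]
  rw [if_pos rfl, if_neg hij.symm, if_pos rfl, mul_one, mul_zero, zero_add]
  refine congrArg (g i + ·) (Finset.sum_congr rfl fun k hk => ?_)
  simp only [Finset.mem_sdiff, Finset.mem_insert, Finset.mem_singleton] at hk
  rw [if_neg (by tauto), if_neg (by tauto)]
  ring

lemma aux_prod (a0 a1 b0 b1 ν : ℝ) (v w : ℂ) :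
    ((a0:ℂ) + (ν:ℂ)*Complex.I*a1 + ((ν:ℂ)*Complex.I)^2*v)
        * (starRingEnd ℂ) ((b0:ℂ) + (ν:ℂ)*Complex.I*b1 + ((ν:ℂ)*Complex.I)^2*w)
      = ((a0:ℂ) + (ν:ℂ)*Complex.I*a1) * ((b0:ℂ) - (ν:ℂ)*Complex.I*b1)
        + (ν:ℂ)^2 * (-(v * ((b0:ℂ) - (ν:ℂ)*Complex.I*b1))
            - ((a0:ℂ) + (ν:ℂ)*Complex.I*a1) * (starRingEnd ℂ) w
            + (ν:ℂ)^2 * (v * (starRingEnd ℂ) w)) := by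
  simp only [map_add, map_mul, map_pow, Complex.conj_ofReal, Complex.conj_I]
  apply Complex.ext <;>
    simp [Complex.mul_re, Complex.mul_im, Complex.add_re, Complex.add_im, Complex.sub_re,
      Complex.sub_im, Complex.conj_re, Complex.conj_im, pow_two] <;> ring

lemma aux_im (a1 a0 b0 b1 ν : ℝ) (Zv : ℂ) :
    ((((a0:ℂ) + (ν:ℂ)*Complex.I*a1) * ((b0:ℂ) - (ν:ℂ)*Complex.I*b1)) + (ν:ℂ)^2 * Zv).im
      = ν * ((a1*b0 - a0*b1) + ν * Zv.im) := by
  simp [Complex.add_im, Complex.mul_im, Complex.mul_re, Complex.sub_re, Complex.sub_im,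
    pow_two]
  ring

theorem branden_negative_correlation (m : ℕ) (p : MvPolynomial (Fin m) ℝ)
    (hml : ∀ i, p.degreeOf i ≤ 1)
    (hp : p = 0 ∨ ∀ z : Fin m → ℂ, (∀ k, 0 < (z k).im) → MvPolynomial.aeval z p ≠ 0)
    (i j : Fin m) (hij : i < j) (x : Fin m → ℝ) :
    MvPolynomial.eval x (MvPolynomial.pderiv i p) *
        MvPolynomial.eval x (MvPolynomial.pderiv j p)
      ≥ MvPolynomial.eval x p *
        MvPolynomial.eval x (MvPolynomial.pderiv i (MvPolynomial.pderiv j p)) := by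
  classical
  rcases hp with rfl | hp
  · simp
  have hij' : i ≠ j := Fin.ne_of_lt hij
  rw [ge_iff_le, ← sub_nonneg]
  refine aux_delta _
    ((∑ k ∈ Finset.univ \ {i, j}, MvPolynomial.eval x (MvPolynomial.pderiv k p))
        * MvPolynomial.eval x (MvPolynomial.pderiv j p)
      - MvPolynomial.eval x p *
        (∑ k ∈ Finset.univ \ {i, j},
          MvPolynomial.eval x (MvPolynomial.pderiv k (MvPolynomial.pderiv j p))))
    (fun δ hδ => ?_)
  set φ : Fin m → Polynomial ℝ := fun k =>
    if k = i then Polynomial.X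
    else if k = j then Polynomial.C (x j)
    else Polynomial.C (x k) + Polynomial.C δ * (Polynomial.X - Polynomial.C (x i)) with hφ
  set a : Polynomial ℝ := MvPolynomial.aeval φ p with ha
  set b : Polynomial ℝ := MvPolynomial.aeval φ (MvPolynomial.pderiv j p) with hb
  -- evaluation over ℝ at x i recovers eval at x
  have hev : ∀ q : MvPolynomial (Fin m) ℝ,
      Polynomial.eval (x i) (MvPolynomial.aeval φ q) = MvPolynomial.eval x q := by
    intro q
    have h2 := aux_comp (S := ℝ) φ (x i) q
    rw [Polynomial.coe_aeval_eq_eval] at h2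
    rw [h2]
    have h3 : (fun k => Polynomial.eval (x i) (φ k)) = x := by
      funext k
      by_cases hki : k = i
      · subst hki; simp [hφ]
      · by_cases hkj : k = j
        · subst hkj; simp [hφ, hki]
        · simp [hφ, hki, hkj]
    calc MvPolynomial.aeval (fun k => Polynomial.eval (x i) (φ k)) q
        = MvPolynomial.eval (fun k => Polynomial.eval (x i) (φ k)) q :=
          RingHom.congr_fun (MvPolynomial.coe_aeval_eq_eval _) q
      _ = MvPolynomial.eval x q := by rw [h3]
  -- derivative of coordinates
  have hφder : ∀ k, Polynomial.eval (x i) (Polynomial.derivative (φ k))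
      = if k = i then 1 else if k = j then 0 else δ := by
    intro k
    by_cases hki : k = i
    · subst hki; simp [hφ]
    · by_cases hkj : k = j
      · subst hkj; simp [hφ, hki]
      · simp [hφ, hki, hkj]
  have hder : ∀ q : MvPolynomial (Fin m) ℝ,
      Polynomial.eval (x i) (Polynomial.derivative (MvPolynomial.aeval φ q))
        = MvPolynomial.eval x (MvPolynomial.pderiv i q)
          + δ * ∑ k ∈ Finset.univ \ {i, j},
              MvPolynomial.eval x (MvPolynomial.pderiv k q) := by
    intro q
    rw [aux_chain, Polynomial.eval_finset_sum]
    rw [Finset.sum_congr rfl (fun k (_ : k ∈ Finset.univ) => by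
      rw [Polynomial.eval_mul, hev (MvPolynomial.pderiv k q), hφder k])]
    exact sum_split i j hij' _ δ
  -- Step A : the key stability inequality
  have stepA : ∀ s : ℂ, 0 < s.im →
      0 ≤ (Polynomial.aeval s a * (starRingEnd ℂ) (Polynomial.aeval s b)).im := by
    intro s hs
    by_contra hneg
    push_neg at hneg
    set z0 : Fin m → ℂ := fun k => Polynomial.aeval s (φ k) with hz0
    have hα : Polynomial.aeval s a = MvPolynomial.aeval z0 p := aux_comp φ s p
    have hβ : Polynomial.aeval s b
        = MvPolynomial.aeval z0 (MvPolynomial.pderiv j p) := aux_comp φ s _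
    rw [hα, hβ] at hneg
    set α := MvPolynomial.aeval z0 p with hαd
    set β := MvPolynomial.aeval z0 (MvPolynomial.pderiv j p) with hβd
    have hβne : β ≠ 0 := by
      intro h0
      rw [h0] at hneg
      simp at hneg
    have hz0i : z0 i = s := by simp [hz0, hφ]
    have hz0j : z0 j = ((x j : ℝ) : ℂ) := by simp [hz0, hφ, hij'.symm]
    have hz0k : ∀ k, k ≠ i → k ≠ j → z0 k = ((x k : ℝ) : ℂ) + (δ : ℂ) * (s - ((x i : ℝ) : ℂ)) := by
      intro k h1 h2
      simp [hz0, hφ, h1, h2]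
    set t : ℂ := ((x j : ℝ) : ℂ) - α / β with htdef
    have hquot : (α / β).im = (α * (starRingEnd ℂ) β).im / Complex.normSq β := by
      rw [Complex.div_im, Complex.mul_im, Complex.conj_re, Complex.conj_im]
      ring
    have hns : 0 < Complex.normSq β := Complex.normSq_pos.mpr hβne
    have ht : 0 < t.im := by
      have hlt : (α * (starRingEnd ℂ) β).im / Complex.normSq β < 0 :=
        div_neg_of_neg_of_pos hneg hns
      rw [htdef, Complex.sub_im, Complex.ofReal_im, hquot]
      linarith
    have hz : ∀ k, 0 < ((Function.update z0 j t) k).im := by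
      intro k
      rcases eq_or_ne k j with rfl | hkj
      · rw [Function.update_self]; exact ht
      · rw [Function.update_of_ne hkj]
        rcases eq_or_ne k i with rfl | hki
        · rw [hz0i]; exact hs
        · rw [hz0k k hki hkj]
          have : (((x k : ℝ) : ℂ) + (δ : ℂ) * (s - ((x i : ℝ) : ℂ))).im = δ * s.im := by
            simp [Complex.add_im, Complex.mul_im, Complex.ofReal_im, Complex.ofReal_re,
              Complex.sub_im]
          rw [this]
          exact mul_pos hδ hs
    refine hp (Function.update z0 j t) hz ?_
    rw [aux_taylor1 p j (hml j) z0 t, hz0j, ← hαd, ← hβd, htdef]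
    field_simp
    ring
  -- assemble
  set a0 : ℝ := Polynomial.eval (x i) a with ha0
  set a1 : ℝ := Polynomial.eval (x i) (Polynomial.derivative a) with ha1
  set b0 : ℝ := Polynomial.eval (x i) b with hb0
  set b1 : ℝ := Polynomial.eval (x i) (Polynomial.derivative b) with hb1
  have ha0v : a0 = MvPolynomial.eval x p := by rw [ha0, ha, hev]
  have hb0v : b0 = MvPolynomial.eval x (MvPolynomial.pderiv j p) := by rw [hb0, hb, hev]
  have ha1v : a1 = MvPolynomial.eval x (MvPolynomial.pderiv i p)
      + δ * ∑ k ∈ Finset.univ \ {i, j}, MvPolynomial.eval x (MvPolynomial.pderiv k p) := by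
    rw [ha1, ha, hder]
  have hb1v : b1 = MvPolynomial.eval x (MvPolynomial.pderiv i (MvPolynomial.pderiv j p))
      + δ * ∑ k ∈ Finset.univ \ {i, j},
          MvPolynomial.eval x (MvPolynomial.pderiv k (MvPolynomial.pderiv j p)) := by
    rw [hb1, hb, hder]
  set R : ℝ → ℝ := fun ν =>
    (-(auxE a (x i) ν * ((b0:ℂ) - (ν:ℂ)*Complex.I*b1))
      - ((a0:ℂ) + (ν:ℂ)*Complex.I*a1) * (starRingEnd ℂ) (auxE b (x i) ν)
      + (ν:ℂ)^2 * (auxE a (x i) ν * (starRingEnd ℂ) (auxE b (x i) ν))).im with hR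
  have hRcont : Continuous R := by
    have hEa := auxE_continuous a (x i)
    have hEb := auxE_continuous b (x i)
    apply Complex.continuous_im.comp
    apply Continuous.add
    apply Continuous.sub
    · exact (hEa.mul (continuous_const.sub
        ((Complex.continuous_ofReal.mul continuous_const).mul continuous_const))).neg
    · exact (continuous_const.add
        ((Complex.continuous_ofReal.mul continuous_const).mul continuous_const)).mul
        (Complex.continuous_conj.comp hEb)
    · exact ((Complex.continuous_ofReal.pow 2).mul
        (hEa.mul (Complex.continuous_conj.comp hEb)))
  have hfinal : 0 ≤ a1 * b0 - a0 * b1 := by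
    refine aux_limit _ R hRcont fun ν hν => ?_
    have hs : (0:ℝ) < (((x i : ℝ) : ℂ) + (ν:ℂ)*Complex.I).im := by
      simp [Complex.add_im, Complex.mul_im, hν]
    have hA := stepA _ hs
    rw [aux_expand a (x i) ν, aux_expand b (x i) ν, ← ha0, ← ha1, ← hb0, ← hb1] at hA
    rw [aux_prod, aux_im] at hA
    rw [hR]
    exact hA
  rw [ha0v, hb0v, ha1v, hb1v] at hfinal
  have := hfinal
  nlinarith [this]
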